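/- An ideal I on ω is weakly Ramsey if and only if for every decreasing sequence (X_n)_{n∈ω} of sets in the dual filter I* there exists an increasing function f: ω → ω with I-positive range and such that f(n+1) ∈ X_{f(n)} for each n ∈ ω. -/

import Mathlib

open Set

/-- `I` is an ideal on `α`: closed under subsets and finite unions,
contains all finite sets, and is not all of `P(α)`. -/
def IsIdealOn {α : Type*} (I : Set (Set α)) : Prop :=
  (∀ A ∈ I, ∀ B : Set α, B ⊆ A → B ∈ I) ∧
  (∀ A ∈ I, ∀ B ∈ I, A ∪ B ∈ I) ∧
  (∀ A : Set α, A.Finite → A ∈ I) ∧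
  (Set.univ : Set α) ∉ I

/-- Generator of the first type of `WR`: a vertical line. -/
def WRgen1 (S : Set (ℕ × ℕ)) : Prop := ∃ i, S = {p : ℕ × ℕ | p.1 = i}

/-- Generator of the second type of `WR`. -/
def WRgen2 (S : Set (ℕ × ℕ)) : Prop :=
  ∀ p ∈ S, ∀ q ∈ S, p ≠ q → p.1 > q.1 + q.2 ∨ q.1 > p.1 + p.2

/-- The ideal `WR`: sets covered by finitely many generators. -/
def WR : Set (Set (ℕ × ℕ)) :=
  {A | ∃ C : Finset (Set (ℕ × ℕ)), (∀ S ∈ C, WRgen1 S ∨ WRgen2 S) ∧ A ⊆ ⋃₀ ↑C}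

/-- Generator of `ED↑`: a vertical line or the graph of a nondecreasing function. -/
def EDgen (S : Set (ℕ × ℕ)) : Prop :=
  (∃ i, S = {p : ℕ × ℕ | p.1 = i}) ∨
  (∃ f : ℕ → ℕ, Monotone f ∧ S = {p : ℕ × ℕ | p.2 = f p.1})

/-- The ideal `ED↑`. -/
def EDup : Set (Set (ℕ × ℕ)) :=
  {A | ∃ C : Finset (Set (ℕ × ℕ)), (∀ S ∈ C, EDgen S) ∧ A ⊆ ⋃₀ ↑C}

/-- A tree of finite sequences: closed under taking prefixes. -/
def IsTree {α : Type*} (T : Set (List α)) : Prop :=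
  ∀ s ∈ T, ∀ t : List α, t <+: s → t ∈ T

/-- `I` is weakly Ramsey: every (nonempty) tree all of whose ramifications
belong to the dual filter `I*` has a branch with `I`-positive range. -/
def WeaklyRamsey {α : Type*} (I : Set (Set α)) : Prop :=
  ∀ T : Set (List α), ([] : List α) ∈ T → IsTree T →
    (∀ s ∈ T, {x : α | s ++ [x] ∈ T}ᶜ ∈ I) →
    ∃ b : ℕ → α, (∀ k, (List.range k).map b ∈ T) ∧ Set.range b ∉ I

/-- `(X n)` is a partition of `α`. -/
def IsPartition {α : Type*} (X : ℕ → Set α) : Prop :=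
  (∀ m n, m ≠ n → Disjoint (X m) (X n)) ∧ (⋃ n, X n) = Set.univ

/-- `S` is a selector: it meets each piece in at most one point. -/
def IsSelector {α : Type*} (X : ℕ → Set α) (S : Set α) : Prop :=
  ∀ n, (S ∩ X n).Subsingleton

/-- Locally selective: every partition into sets from `I` has an `I`-positive selector. -/
def LocallySelective {α : Type*} (I : Set (Set α)) : Prop :=
  ∀ X : ℕ → Set α, IsPartition X → (∀ n, X n ∈ I) →
    ∃ S : Set α, IsSelector X S ∧ S ∉ I

/-- Weakly selective. -/
def WeaklySelective {α : Type*} (I : Set (Set α)) : Prop :=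
  ∀ X : ℕ → Set α, IsPartition X → {n | X n ∉ I}.Subsingleton →
    (∀ n, (⋃ m, ⋃ _ : n ≤ m, X m) ∉ I) →
    ∃ S : Set α, IsSelector X S ∧ S ∉ I

lemma finite_bdd_lists (n m : ℕ) : {l : List ℕ | l.length ≤ m ∧ ∀ x ∈ l, x ≤ n}.Finite := by
  have hsub : {l : List ℕ | l.length ≤ m ∧ ∀ x ∈ l, x ≤ n} ⊆
      (List.map (Fin.val)) '' {l : List (Fin (n+1)) | l.length ≤ m} := by
    rintro l ⟨hl, hb⟩
    refine ⟨l.pmap (fun x h => (⟨x, h⟩ : Fin (n+1))) (fun x hx => Nat.lt_succ_of_le (hb x hx)),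
      by simpa, ?_⟩
    simp [List.map_pmap]
  exact ((List.finite_length_le _ m).image _).subset hsub

lemma chain_pair {R : ℕ → ℕ → Prop} (b : ℕ → ℕ) (n : ℕ)
    (h : ((List.range (n+2)).map b).Chain' R) : R (b n) (b (n+1)) := by
  have heq : (List.range (n+2)).map b = (List.range n).map b ++ [b n, b (n+1)] := by
    simp [List.range_succ, List.append_assoc]
  rw [heq] at h
  simpa using (List.isChain_append.1 h).2.1

lemma ideal_biUnion {I : Set (Set ℕ)} (hI : IsIdealOn I) {β : Type*} {F : Set β}
    (hF : F.Finite) (g : β → Set ℕ) (hg : ∀ b ∈ F, g b ∈ I) : (⋃ b ∈ F, g b) ∈ I := by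
  revert hg
  refine Set.Finite.induction_on (motive := fun F _ => (∀ b ∈ F, g b ∈ I) → (⋃ b ∈ F, g b) ∈ I) F hF ?_ ?_
  · intro _; simpa using hI.2.2.1 ∅ finite_empty
  · intro a s _ _ ih hg
    rw [Set.biUnion_insert]
    exact hI.2.1 _ (hg a (mem_insert _ _)) _ (ih fun b hb => hg b (mem_insert_of_mem _ hb))

theorem weaklyRamsey_iff_decreasing (I : Set (Set ℕ)) (hI : IsIdealOn I) :
    WeaklyRamsey I ↔
    ∀ X : ℕ → Set ℕ, (∀ n, X (n + 1) ⊆ X n) → (∀ n, (X n)ᶜ ∈ I) →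
      ∃ f : ℕ → ℕ, StrictMono f ∧ Set.range f ∉ I ∧ ∀ n, f (n + 1) ∈ X (f n) := by
  constructor
  · intro hWR X hdec hcomp
    set R : ℕ → ℕ → Prop := fun a b => a < b ∧ b ∈ X a with hR
    set T : Set (List ℕ) := {s | s.Chain' R} with hT
    have h1 : ([] : List ℕ) ∈ T := show List.Chain' R [] from List.isChain_nil
    have h2 : IsTree T := fun s hs t ht => hs.prefix ht
    have h3 : ∀ s ∈ T, {x : ℕ | s ++ [x] ∈ T}ᶜ ∈ I := by
      intro s hs
      rcases eq_or_ne s [] with rfl | hne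
      · have : {x : ℕ | ([] : List ℕ) ++ [x] ∈ T}ᶜ = ∅ := by
          ext x; simp [hT, List.Chain', List.isChain_singleton]
        rw [this]; exact hI.2.2.1 _ finite_empty
      · set a := s.getLast hne with ha
        have hsub : {x : ℕ | s ++ [x] ∈ T}ᶜ ⊆ {x | x ≤ a} ∪ (X a)ᶜ := by
          intro x hx
          by_contra hcon
          simp only [mem_union, not_or, mem_setOf_eq, mem_compl_iff, not_not] at hcon
          apply hx
          refine List.isChain_append.2 ⟨hs, List.isChain_singleton _, ?_⟩
          intro y hy z hz
          rw [List.getLast?_eq_getLast (l := s) hne] at hy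
          simp at hy hz
          subst hy; subst hz
          exact ⟨lt_of_not_ge hcon.1, hcon.2⟩
        refine hI.1 _ (hI.2.1 _ (hI.2.2.1 _ ?_) _ (hcomp a)) _ hsub
        exact (Set.finite_Iic a)
    obtain ⟨b, hb, hpos⟩ := hWR T h1 h2 h3
    have hcons : ∀ n, R (b n) (b (n + 1)) := fun n => chain_pair b n (hb (n + 2))
    refine ⟨b, strictMono_nat_of_lt_succ fun n => (hcons n).1, hpos, fun n => (hcons n).2⟩
  · intro h T hnil htree hram
    set Q : ℕ → Set (List ℕ) := fun n => {s | s ∈ T ∧ s.length ≤ n + 1 ∧ ∀ x ∈ s, x ≤ n}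
      with hQ
    set X : ℕ → Set ℕ := fun n => ⋂ s ∈ Q n, {x | s ++ [x] ∈ T} with hX
    have hdec : ∀ n, X (n + 1) ⊆ X n := by
      intro n
      apply Set.biInter_subset_biInter_left
      rintro s ⟨hsT, hlen, hbd⟩
      exact ⟨hsT, hlen.trans (by omega), fun x hx => (hbd x hx).trans (by omega)⟩
    have hcomp : ∀ n, (X n)ᶜ ∈ I := by
      intro n
      have : (X n)ᶜ = ⋃ s ∈ Q n, {x | s ++ [x] ∈ T}ᶜ := by
        simp [hX, Set.compl_iInter]
      rw [this]
      have hQfin : (Q n).Finite :=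
        (finite_bdd_lists n (n + 1)).subset fun s hs => ⟨hs.2.1, hs.2.2⟩
      exact ideal_biUnion hI hQfin _ fun s hs => hram s hs.1
    obtain ⟨f, hmono, hpos, hstep⟩ := h X hdec hcomp
    set b : ℕ → ℕ := fun k => f (k + 1) with hb
    have hbr : ∀ k, (List.range k).map b ∈ T := by
      intro k
      induction k with
      | zero => simpa using hnil
      | succ k ih =>
        have heq : (List.range (k + 1)).map b = (List.range k).map b ++ [b k] := by
          simp [List.range_succ]
        rw [heq]
        have hQmem : (List.range k).map b ∈ Q (f k) := by
          refine ⟨ih, ?_, ?_⟩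
          · simpa using Nat.le_succ_of_le (Nat.le_trans k.le_refl (hmono.le_apply))
          · intro x hx
            simp only [List.mem_map, List.mem_range] at hx
            obtain ⟨i, hi, rfl⟩ := hx
            exact hmono.monotone (by omega)
        have : b k ∈ X (f k) := hstep k
        rw [hX] at this
        exact Set.mem_iInter₂.1 this _ hQmem
    refine ⟨b, hbr, fun hmem => hpos ?_⟩
    have hsub2 : Set.range f ⊆ Set.range b ∪ {f 0} := by
      rintro _ ⟨n, rfl⟩
      rcases n with _ | n
      · exact Or.inr rfl
      · exact Or.inl ⟨n, rfl⟩
    exact hI.1 _ (hI.2.1 _ hmem _ (hI.2.2.1 _ (finite_singleton _))) _ hsub2
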